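/- arXiv:0907.3312 — 2 statements merged into one kernel-verified Lean document; each statement's English description precedes it below -/
import Mathlib

section
/- For all n×n matrices A and B with non-negative real entries, ρ(A∘B)² ≤ ρ((A∘A)(B∘B)), where ρ denotes the spectral radius and ∘ the Hadamard product. -/
open Matrix Filter

/-- The spectral radius of a real square matrix: the largest modulus of its
complex eigenvalues, i.e. the supremum of the moduli of the elements of the
spectrum of the matrix viewed as a complex matrix. -/
noncomputable def specRad {n : ℕ} (A : Matrix (Fin n) (Fin n) ℝ) : ℝ :=
  sSup {r : ℝ | ∃ μ ∈ spectrum ℂ (A.map (fun a => (a : ℂ))), ‖μ‖ = r}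

namespace SpecRadAux

open scoped ENNReal NNReal

attribute [local instance] Matrix.linftyOpNormedAddCommGroup Matrix.linftyOpNormedRing
  Matrix.linftyOpNormedAlgebra

variable {n : ℕ}

noncomputable local instance : CompleteSpace (Matrix (Fin n) (Fin n) ℂ) :=
  FiniteDimensional.complete ℂ (Matrix (Fin n) (Fin n) ℂ)

/-- complexification -/
noncomputable def cmap (X : Matrix (Fin n) (Fin n) ℝ) : Matrix (Fin n) (Fin n) ℂ :=
  X.map (fun a => (a : ℂ))

lemma cmap_eq (X : Matrix (Fin n) (Fin n) ℝ) :
    cmap X = Complex.ofRealHom.mapMatrix X := rfl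

lemma cmap_pow (X : Matrix (Fin n) (Fin n) ℝ) (k : ℕ) :
    cmap (X ^ k) = (cmap X) ^ k := by
  rw [cmap_eq, cmap_eq, map_pow]

lemma cmap_mul (X Y : Matrix (Fin n) (Fin n) ℝ) :
    cmap (X * Y) = cmap X * cmap Y := by
  rw [cmap_eq, cmap_eq, cmap_eq, _root_.map_mul]

/-- entrywise nonnegativity -/
def Nonneg (X : Matrix (Fin n) (Fin n) ℝ) : Prop := ∀ i j, 0 ≤ X i j

lemma Nonneg.mul {X Y : Matrix (Fin n) (Fin n) ℝ} (hX : Nonneg X) (hY : Nonneg Y) :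
    Nonneg (X * Y) := fun i j => by
  rw [Matrix.mul_apply]
  exact Finset.sum_nonneg fun k _ => mul_nonneg (hX i k) (hY k j)

lemma Nonneg.pow {X : Matrix (Fin n) (Fin n) ℝ} (hX : Nonneg X) :
    ∀ m, Nonneg (X ^ m) := by
  intro m
  induction m with
  | zero =>
    intro i j
    rw [pow_zero]
    by_cases h : i = j <;> simp [Matrix.one_apply, h]
  | succ m ih =>
    rw [pow_succ]
    exact ih.mul hX

lemma Nonneg.hadamard {X Y : Matrix (Fin n) (Fin n) ℝ} (hX : Nonneg X) (hY : Nonneg Y) :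
    Nonneg (X.hadamard Y) := fun i j => by
  rw [Matrix.hadamard_apply]; exact mul_nonneg (hX i j) (hY i j)

lemma norm_cmap_le {X : Matrix (Fin n) (Fin n) ℝ} (hX : Nonneg X) {t : ℝ}
    (ht : 0 ≤ t) (h : ∀ i, ∑ j, X i j ≤ t) : ‖cmap X‖ ≤ t := by
  rw [Matrix.linfty_opNorm_def]
  have key : (Finset.univ.sup fun i => ∑ j, ‖(cmap X) i j‖₊) ≤ t.toNNReal := by
    apply Finset.sup_le
    intro i _
    rw [← NNReal.coe_le_coe, NNReal.coe_sum, Real.coe_toNNReal t ht]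
    calc (∑ j, ((‖(cmap X) i j‖₊ : ℝ≥0) : ℝ)) = ∑ j, X i j := by
          refine Finset.sum_congr rfl fun j _ => ?_
          simp only [coe_nnnorm, cmap, Matrix.map_apply, Complex.norm_real]
          exact Real.norm_of_nonneg (hX i j)
      _ ≤ t := h i
  calc ((Finset.univ.sup fun i => ∑ j, ‖(cmap X) i j‖₊ : ℝ≥0) : ℝ)
      ≤ ((t.toNNReal : ℝ≥0) : ℝ) := NNReal.coe_le_coe.mpr key
    _ = t := Real.coe_toNNReal t ht

lemma row_sum_le_norm_cmap {X : Matrix (Fin n) (Fin n) ℝ} (hX : Nonneg X) (i : Fin n) :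
    ∑ j, X i j ≤ ‖cmap X‖ := by
  rw [Matrix.linfty_opNorm_def]
  have key : (fun i => ∑ j, ‖(cmap X) i j‖₊) i ≤
      Finset.univ.sup fun i => ∑ j, ‖(cmap X) i j‖₊ :=
    Finset.le_sup (f := fun i => ∑ j, ‖(cmap X) i j‖₊) (Finset.mem_univ i)
  have : ((∑ j, ‖(cmap X) i j‖₊ : ℝ≥0) : ℝ) = ∑ j, X i j := by
    rw [NNReal.coe_sum]
    refine Finset.sum_congr rfl fun j _ => ?_
    simp only [coe_nnnorm, cmap, Matrix.map_apply, Complex.norm_real]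
    exact Real.norm_of_nonneg (hX i j)
  rw [← this]
  exact_mod_cast key

/-- The key Cauchy–Schwarz entrywise estimate. -/
lemma entry_pow_le (A B : Matrix (Fin n) (Fin n) ℝ) (hA : Nonneg A) (hB : Nonneg B) :
    ∀ (m : ℕ) (i j : Fin n),
      ((A.hadamard B) ^ (2 * m)) i j ≤
        Real.sqrt (((A.hadamard A * B.hadamard B) ^ m) i j) *
          Real.sqrt (((B.hadamard B * A.hadamard A) ^ m) i j) := by
  set X := A.hadamard B with hXdef
  set C := A.hadamard A * B.hadamard B with hCdef
  set D := B.hadamard B * A.hadamard A with hDdef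
  have hXn : Nonneg X := hA.hadamard hB
  have hCn : Nonneg C := (hA.hadamard hA).mul (hB.hadamard hB)
  have hDn : Nonneg D := (hB.hadamard hB).mul (hA.hadamard hA)
  intro m
  induction m with
  | zero =>
    intro i j
    simp only [Nat.mul_zero, pow_zero]
    by_cases h : i = j <;> simp [Matrix.one_apply, h]
  | succ m ih =>
    intro i j
    have hsplit : X ^ (2 * (m + 1)) = X ^ (2 * m) * (X * X) := by
      rw [show 2 * (m + 1) = 2 * m + 2 by ring, pow_add, pow_two]
    -- expand the entry as a sum over pairs
    have hentry : (X ^ (2 * (m + 1))) i j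
        = ∑ p : Fin n × Fin n, (X ^ (2 * m)) i p.1 * (X p.1 p.2 * X p.2 j) := by
      rw [hsplit, Matrix.mul_apply]
      rw [← Finset.univ_product_univ, Finset.sum_product]
      refine Finset.sum_congr rfl fun l _ => ?_
      rw [Matrix.mul_apply, Finset.mul_sum]
    set f : Fin n × Fin n → ℝ :=
      fun p => Real.sqrt ((C ^ m) i p.1) * (A p.1 p.2 * B p.2 j) with hf
    set g : Fin n × Fin n → ℝ :=
      fun p => Real.sqrt ((D ^ m) i p.1) * (B p.1 p.2 * A p.2 j) with hg
    have hfg : ∀ p : Fin n × Fin n,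
        (X ^ (2 * m)) i p.1 * (X p.1 p.2 * X p.2 j) ≤ f p * g p := by
      intro p
      have h1 : f p * g p =
          (Real.sqrt ((C ^ m) i p.1) * Real.sqrt ((D ^ m) i p.1)) *
            (X p.1 p.2 * X p.2 j) := by
        simp only [hf, hg, hXdef, Matrix.hadamard_apply]
        ring
      rw [h1]
      refine mul_le_mul_of_nonneg_right (ih i p.1) ?_
      exact mul_nonneg (hXn p.1 p.2) (hXn p.2 j)
    have hfnonneg : ∀ p : Fin n × Fin n, 0 ≤ f p := fun p =>
      mul_nonneg (Real.sqrt_nonneg _) (mul_nonneg (hA p.1 p.2) (hB p.2 j))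
    have hgnonneg : ∀ p : Fin n × Fin n, 0 ≤ g p := fun p =>
      mul_nonneg (Real.sqrt_nonneg _) (mul_nonneg (hB p.1 p.2) (hA p.2 j))
    have hCS : (∑ p : Fin n × Fin n, f p * g p) ^ 2 ≤
        (∑ p : Fin n × Fin n, f p ^ 2) * (∑ p : Fin n × Fin n, g p ^ 2) :=
      Finset.sum_mul_sq_le_sq_mul_sq _ _ _
    have hsum_f : (∑ p : Fin n × Fin n, f p ^ 2) = (C ^ (m + 1)) i j := by
      rw [pow_succ, Matrix.mul_apply]
      rw [← Finset.univ_product_univ, Finset.sum_product]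
      refine Finset.sum_congr rfl fun l _ => ?_
      rw [hCdef, Matrix.mul_apply, Finset.mul_sum]
      refine Finset.sum_congr rfl fun k _ => ?_
      simp only [hf, mul_pow, Matrix.hadamard_apply]
      rw [Real.sq_sqrt (hCn.pow m i l)]
      ring
    have hsum_g : (∑ p : Fin n × Fin n, g p ^ 2) = (D ^ (m + 1)) i j := by
      rw [pow_succ, Matrix.mul_apply]
      rw [← Finset.univ_product_univ, Finset.sum_product]
      refine Finset.sum_congr rfl fun l _ => ?_
      rw [hDdef, Matrix.mul_apply, Finset.mul_sum]
      refine Finset.sum_congr rfl fun k _ => ?_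
      simp only [hg, mul_pow, Matrix.hadamard_apply]
      rw [Real.sq_sqrt (hDn.pow m i l)]
      ring
    have hsumfg_nonneg : 0 ≤ ∑ p : Fin n × Fin n, f p * g p :=
      Finset.sum_nonneg fun p _ => mul_nonneg (hfnonneg p) (hgnonneg p)
    calc (X ^ (2 * (m + 1))) i j
        ≤ ∑ p : Fin n × Fin n, f p * g p := by
          rw [hentry]; exact Finset.sum_le_sum fun p _ => hfg p
      _ = Real.sqrt ((∑ p : Fin n × Fin n, f p * g p) ^ 2) :=
          (Real.sqrt_sq hsumfg_nonneg).symm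
      _ ≤ Real.sqrt ((∑ p : Fin n × Fin n, f p ^ 2) * (∑ p : Fin n × Fin n, g p ^ 2)) :=
          Real.sqrt_le_sqrt hCS
      _ = Real.sqrt ((C ^ (m + 1)) i j) * Real.sqrt ((D ^ (m + 1)) i j) := by
          rw [hsum_f, hsum_g,
            Real.sqrt_mul (hCn.pow (m + 1) i j)]

/-- Norm estimate derived from the entrywise estimate. -/
lemma norm_pow_le (A B : Matrix (Fin n) (Fin n) ℝ) (hA : Nonneg A) (hB : Nonneg B) (m : ℕ) :
    ‖cmap ((A.hadamard B) ^ (2 * m))‖ ≤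
      Real.sqrt (‖cmap ((A.hadamard A * B.hadamard B) ^ m)‖ *
        ‖cmap ((B.hadamard B * A.hadamard A) ^ m)‖) := by
  set X := A.hadamard B
  set C := A.hadamard A * B.hadamard B
  set D := B.hadamard B * A.hadamard A
  have hXn : Nonneg X := hA.hadamard hB
  have hCn : Nonneg C := (hA.hadamard hA).mul (hB.hadamard hB)
  have hDn : Nonneg D := (hB.hadamard hB).mul (hA.hadamard hA)
  refine norm_cmap_le (hXn.pow _) (Real.sqrt_nonneg _) fun i => ?_
  calc (∑ j, (X ^ (2 * m)) i j)
      ≤ ∑ j, Real.sqrt ((C ^ m) i j) * Real.sqrt ((D ^ m) i j) :=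
        Finset.sum_le_sum fun j _ => entry_pow_le A B hA hB m i j
    _ ≤ Real.sqrt (∑ j, (C ^ m) i j) * Real.sqrt (∑ j, (D ^ m) i j) := by
        have hrow : (∑ j, Real.sqrt ((C ^ m) i j) * Real.sqrt ((D ^ m) i j)) ^ 2 ≤
            (∑ j, (C ^ m) i j) * (∑ j, (D ^ m) i j) := by
          refine Finset.sum_sq_le_sum_mul_sum_of_sq_eq_mul _
            (fun j _ => hCn.pow m i j) (fun j _ => hDn.pow m i j) (fun j _ => ?_)
          rw [mul_pow, Real.sq_sqrt (hCn.pow m i j), Real.sq_sqrt (hDn.pow m i j)]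
        have h0 : 0 ≤ ∑ j, Real.sqrt ((C ^ m) i j) * Real.sqrt ((D ^ m) i j) :=
          Finset.sum_nonneg fun j _ => mul_nonneg (Real.sqrt_nonneg _) (Real.sqrt_nonneg _)
        calc (∑ j, Real.sqrt ((C ^ m) i j) * Real.sqrt ((D ^ m) i j))
            = Real.sqrt ((∑ j, Real.sqrt ((C ^ m) i j) * Real.sqrt ((D ^ m) i j)) ^ 2) :=
              (Real.sqrt_sq h0).symm
          _ ≤ Real.sqrt ((∑ j, (C ^ m) i j) * (∑ j, (D ^ m) i j)) := Real.sqrt_le_sqrt hrow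
          _ = _ := Real.sqrt_mul (Finset.sum_nonneg fun j _ => hCn.pow m i j) _
    _ ≤ Real.sqrt ‖cmap (C ^ m)‖ * Real.sqrt ‖cmap (D ^ m)‖ := by
        refine mul_le_mul (Real.sqrt_le_sqrt (row_sum_le_norm_cmap (hCn.pow m) i))
          (Real.sqrt_le_sqrt (row_sum_le_norm_cmap (hDn.pow m) i)) (Real.sqrt_nonneg _)
          (Real.sqrt_nonneg _)
    _ = Real.sqrt (‖cmap (C ^ m)‖ * ‖cmap (D ^ m)‖) :=
        (Real.sqrt_mul (norm_nonneg _) _).symm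

lemma nnnorm_pow_le (A B : Matrix (Fin n) (Fin n) ℝ) (hA : Nonneg A) (hB : Nonneg B) (m : ℕ) :
    ‖cmap ((A.hadamard B) ^ (2 * m))‖₊ ≤
      NNReal.sqrt (‖cmap ((A.hadamard A * B.hadamard B) ^ m)‖₊ *
        ‖cmap ((B.hadamard B * A.hadamard A) ^ m)‖₊) := by
  rw [← NNReal.coe_le_coe, Real.coe_sqrt, NNReal.coe_mul, coe_nnnorm, coe_nnnorm, coe_nnnorm]
  exact norm_pow_le A B hA hB m

lemma spectralRadius_mul_comm_le (a b : Matrix (Fin n) (Fin n) ℂ) :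
    spectralRadius ℂ (a * b) ≤ spectralRadius ℂ (b * a) := by
  rw [spectralRadius, spectralRadius]
  refine iSup₂_le fun μ hμ => ?_
  rcases eq_or_ne μ 0 with h | h
  · simp [h]
  · have hμ' : μ ∈ spectrum ℂ (b * a) := by
      have h1 : μ ∈ spectrum ℂ (a * b) \ {0} := ⟨hμ, h⟩
      rw [spectrum.nonzero_mul_comm] at h1
      exact h1.1
    exact le_iSup₂ (f := fun k (_ : k ∈ spectrum ℂ (b * a)) => (‖k‖₊ : ℝ≥0∞)) μ hμ'

lemma spectralRadius_mul_comm (a b : Matrix (Fin n) (Fin n) ℂ) :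
    spectralRadius ℂ (a * b) = spectralRadius ℂ (b * a) :=
  le_antisymm (spectralRadius_mul_comm_le a b) (spectralRadius_mul_comm_le b a)

lemma specRad_eq_sSup (X : Matrix (Fin n) (Fin n) ℝ) :
    specRad X = sSup {r : ℝ | ∃ μ ∈ spectrum ℂ (cmap X), ‖μ‖ = r} := rfl

lemma specRad_nonneg (X : Matrix (Fin n) (Fin n) ℝ) : 0 ≤ specRad X :=
  Real.sSup_nonneg fun _ ⟨μ, _, h⟩ => h ▸ norm_nonneg μ

lemma specRad_le_toReal (hn : 0 < n) (X : Matrix (Fin n) (Fin n) ℝ) :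
    specRad X ≤ (spectralRadius ℂ (cmap X)).toReal := by
  haveI : Nonempty (Fin n) := ⟨⟨0, hn⟩⟩
  rw [specRad_eq_sSup]
  refine Real.sSup_le ?_ ENNReal.toReal_nonneg
  rintro r ⟨μ, hμ, rfl⟩
  have h1 : (‖μ‖₊ : ℝ≥0∞) ≤ spectralRadius ℂ (cmap X) := by
    rw [spectralRadius]
    exact le_iSup₂ (f := fun k (_ : k ∈ spectrum ℂ (cmap X)) => (‖k‖₊ : ℝ≥0∞)) μ hμ
  have h2 : spectralRadius ℂ (cmap X) ≠ ⊤ :=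
    ne_top_of_le_ne_top ENNReal.coe_ne_top (spectrum.spectralRadius_le_nnnorm (𝕜 := ℂ) _)
  have h3 := ENNReal.toReal_mono h2 h1
  rw [ENNReal.coe_toReal, coe_nnnorm] at h3
  exact h3

lemma toReal_le_specRad (hn : 0 < n) (X : Matrix (Fin n) (Fin n) ℝ) :
    (spectralRadius ℂ (cmap X)).toReal ≤ specRad X := by
  haveI : Nonempty (Fin n) := ⟨⟨0, hn⟩⟩
  have hbdd : BddAbove {r : ℝ | ∃ μ ∈ spectrum ℂ (cmap X), ‖μ‖ = r} := by
    refine ⟨‖cmap X‖, ?_⟩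
    rintro r ⟨μ, hμ, rfl⟩
    exact spectrum.norm_le_norm_of_mem hμ
  have hle : spectralRadius ℂ (cmap X) ≤ ENNReal.ofReal (specRad X) := by
    rw [spectralRadius]
    refine iSup₂_le fun μ hμ => ?_
    have hm : ‖μ‖ ∈ {r : ℝ | ∃ μ ∈ spectrum ℂ (cmap X), ‖μ‖ = r} :=
      ⟨μ, hμ, rfl⟩
    have h1 : ‖μ‖ ≤ specRad X := by
      exact le_csSup hbdd hm
    calc (‖μ‖₊ : ℝ≥0∞) = ENNReal.ofReal ‖μ‖ := (ofReal_norm μ).symm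
      _ ≤ ENNReal.ofReal (specRad X) := ENNReal.ofReal_le_ofReal h1
  calc (spectralRadius ℂ (cmap X)).toReal
      ≤ (ENNReal.ofReal (specRad X)).toReal :=
        ENNReal.toReal_mono ENNReal.ofReal_ne_top hle
    _ = specRad X := ENNReal.toReal_ofReal (specRad_nonneg X)

/-- Main estimate at the level of `spectralRadius` in `ℝ≥0∞`. -/
lemma main_ennreal (hn : 0 < n) (A B : Matrix (Fin n) (Fin n) ℝ)
    (hA : Nonneg A) (hB : Nonneg B) :
    spectralRadius ℂ (cmap (A.hadamard B)) ^ (2 : ℕ) ≤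
      spectralRadius ℂ (cmap (A.hadamard A * B.hadamard B)) := by
  haveI : Nonempty (Fin n) := ⟨⟨0, hn⟩⟩
  set X := A.hadamard B
  set C := A.hadamard A * B.hadamard B with hCdef
  set D := B.hadamard B * A.hadamard A with hDdef
  set r := spectralRadius ℂ (cmap X) with hr
  set c := spectralRadius ℂ (cmap C) with hc
  set d := spectralRadius ℂ (cmap D) with hd
  have hdc : d = c := by
    rw [hd, hc, hCdef, hDdef, cmap_mul, cmap_mul]
    exact spectralRadius_mul_comm _ _
  have hc_top : c ≠ ⊤ :=
    ne_top_of_le_ne_top ENNReal.coe_ne_top (spectrum.spectralRadius_le_nnnorm (𝕜 := ℂ) _)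
  have hd_top : d ≠ ⊤ := by rw [hdc]; exact hc_top
  -- the sequences
  set u : ℕ → ℝ≥0∞ := fun m => ((‖(cmap C) ^ (m + 1)‖₊ : ℝ≥0∞) ^ (1 / ((m : ℝ) + 1))) ^ (1/2 : ℝ)
    with hu
  set v : ℕ → ℝ≥0∞ := fun m => ((‖(cmap D) ^ (m + 1)‖₊ : ℝ≥0∞) ^ (1 / ((m : ℝ) + 1))) ^ (1/2 : ℝ)
    with hv
  -- per-m bound
  have key : ∀ m : ℕ, r ^ (2 : ℝ) ≤ u m * v m := by
    intro m
    have h2m : (2 * m + 1) + 1 = 2 * (m + 1) := by ring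
    have h1 : r ≤ (‖(cmap X) ^ (2 * (m + 1))‖₊ : ℝ≥0∞) ^ (1 / (2 * ((m : ℝ) + 1))) := by
      have h := spectrum.spectralRadius_le_pow_nnnorm_pow_one_div ℂ (cmap X) (2 * m + 1)
      rw [h2m] at h
      rw [nnnorm_one, ENNReal.coe_one, ENNReal.one_rpow, mul_one] at h
      convert h using 2
      push_cast
      ring
    have h2 : r ^ (2 : ℝ) ≤ (‖(cmap X) ^ (2 * (m + 1))‖₊ : ℝ≥0∞) ^ (1 / ((m : ℝ) + 1)) := by
      calc r ^ (2 : ℝ)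
          ≤ ((‖(cmap X) ^ (2 * (m + 1))‖₊ : ℝ≥0∞) ^ (1 / (2 * ((m : ℝ) + 1)))) ^ (2 : ℝ) :=
            ENNReal.rpow_le_rpow h1 (by norm_num)
        _ = (‖(cmap X) ^ (2 * (m + 1))‖₊ : ℝ≥0∞) ^ (1 / ((m : ℝ) + 1)) := by
            rw [← ENNReal.rpow_mul]
            congr 1
            have : ((m : ℝ) + 1) ≠ 0 := by positivity
            field_simp
    have h3 : (‖(cmap X) ^ (2 * (m + 1))‖₊ : ℝ≥0∞) ≤
        ((‖(cmap C) ^ (m + 1)‖₊ : ℝ≥0∞) * (‖(cmap D) ^ (m + 1)‖₊ : ℝ≥0∞)) ^ (1/2 : ℝ) := by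
      have := nnnorm_pow_le A B hA hB (m + 1)
      rw [← cmap_pow, ← cmap_pow, ← cmap_pow] at *
      calc (‖cmap (X ^ (2 * (m + 1)))‖₊ : ℝ≥0∞)
          ≤ ((NNReal.sqrt (‖cmap (C ^ (m + 1))‖₊ * ‖cmap (D ^ (m + 1))‖₊) : ℝ≥0) : ℝ≥0∞) :=
            ENNReal.coe_le_coe.mpr this
        _ = ((‖cmap (C ^ (m + 1))‖₊ * ‖cmap (D ^ (m + 1))‖₊ : ℝ≥0) : ℝ≥0∞) ^ (1/2 : ℝ) := by
            rw [NNReal.sqrt_eq_rpow, ENNReal.coe_rpow_of_nonneg _ (by norm_num : (0:ℝ) ≤ 1/2)]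
        _ = _ := by rw [ENNReal.coe_mul]
    calc r ^ (2 : ℝ)
        ≤ (‖(cmap X) ^ (2 * (m + 1))‖₊ : ℝ≥0∞) ^ (1 / ((m : ℝ) + 1)) := h2
      _ ≤ (((‖(cmap C) ^ (m + 1)‖₊ : ℝ≥0∞) * (‖(cmap D) ^ (m + 1)‖₊ : ℝ≥0∞)) ^ (1/2 : ℝ))
            ^ (1 / ((m : ℝ) + 1)) :=
          ENNReal.rpow_le_rpow h3 (by positivity)
      _ = u m * v m := by
          rw [← ENNReal.rpow_mul,
            ENNReal.mul_rpow_of_nonneg _ _ (by positivity : (0:ℝ) ≤ 1/2 * (1 / ((m : ℝ) + 1))),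
            hu, hv]
          dsimp only
          rw [← ENNReal.rpow_mul, ← ENNReal.rpow_mul]
          ring_nf
  -- limits
  have gelC : Tendsto (fun m : ℕ => (‖(cmap C) ^ m‖₊ : ℝ≥0∞) ^ (1 / (m : ℝ))) atTop (nhds c) :=
    spectrum.pow_nnnorm_pow_one_div_tendsto_nhds_spectralRadius (cmap C)
  have gelD : Tendsto (fun m : ℕ => (‖(cmap D) ^ m‖₊ : ℝ≥0∞) ^ (1 / (m : ℝ))) atTop (nhds d) :=
    spectrum.pow_nnnorm_pow_one_div_tendsto_nhds_spectralRadius (cmap D)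
  have limu : Tendsto u atTop (nhds (c ^ (1/2 : ℝ))) := by
    have h := (gelC.comp (tendsto_add_atTop_nat 1)).ennrpow_const (1/2 : ℝ)
    refine h.congr fun m => ?_
    simp only [Function.comp, hu]
    push_cast
    rfl
  have limv : Tendsto v atTop (nhds (d ^ (1/2 : ℝ))) := by
    have h := (gelD.comp (tendsto_add_atTop_nat 1)).ennrpow_const (1/2 : ℝ)
    refine h.congr fun m => ?_
    simp only [Function.comp, hv]
    push_cast
    rfl
  have hcf : c ^ (1/2 : ℝ) ≠ ⊤ := ENNReal.rpow_ne_top_of_nonneg (by norm_num) hc_top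
  have hdf : d ^ (1/2 : ℝ) ≠ ⊤ := ENNReal.rpow_ne_top_of_nonneg (by norm_num) hd_top
  have limuv : Tendsto (fun m => u m * v m) atTop (nhds (c ^ (1/2 : ℝ) * d ^ (1/2 : ℝ))) :=
    ENNReal.Tendsto.mul limu (Or.inr hdf) limv (Or.inr hcf)
  have hfinal : r ^ (2 : ℝ) ≤ c ^ (1/2 : ℝ) * d ^ (1/2 : ℝ) :=
    ge_of_tendsto' limuv key
  rw [hdc] at hfinal
  have hcc : c ^ (1/2 : ℝ) * c ^ (1/2 : ℝ) ≤ c := by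
    rcases eq_or_ne c 0 with h0 | h0
    · rw [h0, ENNReal.zero_rpow_of_pos (by norm_num)]
      simp
    · rw [← ENNReal.rpow_add _ _ h0 hc_top]
      norm_num
  have : r ^ (2 : ℝ) ≤ c := le_trans hfinal hcc
  calc r ^ (2 : ℕ) = r ^ ((2 : ℕ) : ℝ) := (ENNReal.rpow_natCast r 2).symm
    _ = r ^ (2 : ℝ) := by norm_num
    _ ≤ c := this

lemma final (hn : 0 < n) (A B : Matrix (Fin n) (Fin n) ℝ)
    (hA : Nonneg A) (hB : Nonneg B) :
    specRad (A.hadamard B) ^ 2 ≤ specRad ((A.hadamard A) * (B.hadamard B)) := by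
  have h1 : specRad (A.hadamard B) ≤
      (spectralRadius ℂ (SpecRadAux.cmap (A.hadamard B))).toReal :=
    SpecRadAux.specRad_le_toReal hn _
  have h2 : (spectralRadius ℂ (SpecRadAux.cmap (A.hadamard A * B.hadamard B))).toReal ≤
      specRad (A.hadamard A * B.hadamard B) :=
    SpecRadAux.toReal_le_specRad hn _
  have h3 := SpecRadAux.main_ennreal hn A B hA hB
  have hc_top : spectralRadius ℂ (SpecRadAux.cmap (A.hadamard A * B.hadamard B)) ≠ ⊤ := by
    haveI : Nonempty (Fin n) := ⟨⟨0, hn⟩⟩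
    exact ne_top_of_le_ne_top ENNReal.coe_ne_top (spectrum.spectralRadius_le_nnnorm (𝕜 := ℂ) _)
  calc specRad (A.hadamard B) ^ 2
      ≤ (spectralRadius ℂ (SpecRadAux.cmap (A.hadamard B))).toReal ^ 2 := by
        exact pow_le_pow_left₀ (SpecRadAux.specRad_nonneg _) h1 2
    _ = ((spectralRadius ℂ (SpecRadAux.cmap (A.hadamard B))) ^ (2 : ℕ)).toReal := by
        rw [ENNReal.toReal_pow]
    _ ≤ (spectralRadius ℂ (SpecRadAux.cmap (A.hadamard A * B.hadamard B))).toReal :=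
        ENNReal.toReal_mono hc_top h3
    _ ≤ specRad (A.hadamard A * B.hadamard B) := h2

end SpecRadAux

theorem spectral_radius_hadamard_sq_le {n : ℕ} (A B : Matrix (Fin n) (Fin n) ℝ)
    (hA : ∀ i j, 0 ≤ A i j) (hB : ∀ i j, 0 ≤ B i j) :
    specRad (A.hadamard B) ^ 2 ≤ specRad ((A.hadamard A) * (B.hadamard B)) := by
  rcases Nat.eq_zero_or_pos n with hn | hn
  · subst hn
    haveI : Subsingleton (Matrix (Fin 0) (Fin 0) ℂ) :=
      ⟨fun a b => by ext i j; exact i.elim0⟩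
    have hzero : ∀ Y : Matrix (Fin 0) (Fin 0) ℝ, specRad Y = 0 := by
      intro Y
      have hs : spectrum ℂ (Y.map (fun a => (a : ℂ))) = ∅ := by
        ext μ
        simp [spectrum.mem_iff, isUnit_of_subsingleton]
      rw [specRad, hs]
      simp [Real.sSup_empty]
    rw [hzero, hzero]
    norm_num
  · exact SpecRadAux.final hn A B hA hB
end

section
/- For all n×n matrices A and B with non-negative real entries, ρ((A∘A)(B∘B)) ≤ ρ(AB)², where ρ denotes the spectral radius and ∘ the Hadamard product. -/
open Matrix Filter
open scoped ENNReal NNReal Topology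

attribute [local instance] Matrix.linftyOpNormedRing Matrix.linftyOpNormedAlgebra

namespace SpecRadAux

variable {n : ℕ}

lemma mul_entries_nonneg {X Y : Matrix (Fin n) (Fin n) ℝ}
    (hX : ∀ i j, 0 ≤ X i j) (hY : ∀ i j, 0 ≤ Y i j) : ∀ i j, 0 ≤ (X * Y) i j := by
  intro i j
  rw [Matrix.mul_apply]
  exact Finset.sum_nonneg fun k _ => mul_nonneg (hX i k) (hY k j)

lemma pow_entries_nonneg {X : Matrix (Fin n) (Fin n) ℝ}
    (hX : ∀ i j, 0 ≤ X i j) : ∀ k, ∀ i j, 0 ≤ (X ^ k) i j := by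
  intro k
  induction k with
  | zero =>
    intro i j
    rw [pow_zero]
    by_cases h : i = j
    · simp [Matrix.one_apply, h]
    · simp [Matrix.one_apply, h]
  | succ k ih =>
    rw [pow_succ]
    exact mul_entries_nonneg ih hX

/-- Cauchy–Schwarz-type entrywise inequality. -/
lemma step {X Y : Matrix (Fin n) (Fin n) ℝ}
    (hX : ∀ i j, 0 ≤ X i j) (hY : ∀ i j, 0 ≤ Y i j) (i j : Fin n) :
    ((X.hadamard X) * (Y.hadamard Y)) i j ≤ ((X * Y).hadamard (X * Y)) i j := by
  simp only [Matrix.mul_apply, Matrix.hadamard_apply]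
  have h1 : ∑ k, X i k * X i k * (Y k j * Y k j) = ∑ k, (X i k * Y k j) ^ 2 := by
    apply Finset.sum_congr rfl
    intro k _
    ring
  rw [h1, ← sq]
  exact Finset.sum_sq_le_sq_sum_of_nonneg (fun k _ => mul_nonneg (hX i k) (hY k j))

lemma key {A B : Matrix (Fin n) (Fin n) ℝ}
    (hA : ∀ i j, 0 ≤ A i j) (hB : ∀ i j, 0 ≤ B i j) (k : ℕ) (i j : Fin n) :
    (((A.hadamard A) * (B.hadamard B)) ^ k) i j
      ≤ (((A * B) ^ k).hadamard ((A * B) ^ k)) i j := by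
  set C := A * B with hC
  have hCpos : ∀ i j, 0 ≤ C i j := mul_entries_nonneg hA hB
  have hh : ∀ i j, 0 ≤ (A.hadamard A) i j := fun i j =>
    mul_nonneg (hA i j) (hA i j)
  have hh' : ∀ i j, 0 ≤ (B.hadamard B) i j := fun i j =>
    mul_nonneg (hB i j) (hB i j)
  have hM : ∀ i j, 0 ≤ ((A.hadamard A) * (B.hadamard B)) i j :=
    mul_entries_nonneg hh hh'
  induction k generalizing i j with
  | zero =>
    simp only [pow_zero, Matrix.hadamard_apply]
    by_cases h : i = j
    · simp [Matrix.one_apply, h]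
    · simp [Matrix.one_apply, h]
  | succ k ih =>
    rw [pow_succ, pow_succ]
    calc ((((A.hadamard A) * (B.hadamard B)) ^ k) * ((A.hadamard A) * (B.hadamard B))) i j
        ≤ (((C ^ k).hadamard (C ^ k)) * ((C).hadamard (C))) i j := by
          rw [Matrix.mul_apply, Matrix.mul_apply]
          apply Finset.sum_le_sum
          intro l _
          apply mul_le_mul (ih i l) (step hA hB l j) (hM l j)
          exact mul_nonneg (pow_entries_nonneg hCpos k i l) (pow_entries_nonneg hCpos k i l)
      _ ≤ ((C ^ k * C).hadamard (C ^ k * C)) i j :=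
          step (pow_entries_nonneg hCpos k) hCpos i j

lemma real_nnnorm_mono {a b : ℝ} (ha : 0 ≤ a) (h : a ≤ b) : ‖a‖₊ ≤ ‖b‖₊ := by
  rw [← NNReal.coe_le_coe]
  simp only [coe_nnnorm, Real.norm_eq_abs]
  rw [abs_of_nonneg ha, abs_of_nonneg (ha.trans h)]
  exact h

/-- If `0 ≤ P ≤ Q∘Q` entrywise then `‖P‖ ≤ ‖Q‖²` for the `L∞` operator norm
of the complexifications. -/
lemma nnnorm_le_sq {P Q : Matrix (Fin n) (Fin n) ℝ}
    (hP : ∀ i j, 0 ≤ P i j) (h : ∀ i j, P i j ≤ Q i j * Q i j) :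
    ‖P.map (fun a => (a : ℂ))‖₊ ≤ ‖Q.map (fun a => (a : ℂ))‖₊ ^ 2 := by
  rw [Matrix.linfty_opNNNorm_def, Matrix.linfty_opNNNorm_def]
  apply Finset.sup_le
  intro i _
  calc ∑ j, ‖(P.map (fun a => (a : ℂ))) i j‖₊
      = ∑ j, ‖P i j‖₊ := by
        apply Finset.sum_congr rfl
        intro j _
        simp [Matrix.map_apply]
    _ ≤ ∑ j, ‖Q i j‖₊ ^ 2 := by
        apply Finset.sum_le_sum
        intro j _
        calc ‖P i j‖₊ ≤ ‖Q i j * Q i j‖₊ := real_nnnorm_mono (hP i j) (h i j)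
          _ = ‖Q i j‖₊ ^ 2 := by rw [sq, nnnorm_mul]
    _ ≤ (∑ j, ‖Q i j‖₊) ^ 2 :=
        Finset.sum_sq_le_sq_sum_of_nonneg (fun j _ => zero_le)
    _ ≤ ((Finset.univ : Finset (Fin n)).sup fun i => ∑ j, ‖(Q.map (fun a => (a : ℂ))) i j‖₊) ^ 2 := by
        apply pow_le_pow_left₀ zero_le
        have : ∑ j, ‖Q i j‖₊ = ∑ j, ‖(Q.map (fun a => (a : ℂ))) i j‖₊ := by
          apply Finset.sum_congr rfl
          intro j _
          simp [Matrix.map_apply]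
        rw [this]
        exact Finset.le_sup (f := fun i => ∑ j, ‖(Q.map (fun a => (a : ℂ))) i j‖₊) (Finset.mem_univ i)

lemma map_pow (X : Matrix (Fin n) (Fin n) ℝ) (k : ℕ) :
    (X ^ k).map (fun a => (a : ℂ)) = (X.map (fun a => (a : ℂ))) ^ k := by
  have : (X.map (fun a => (a : ℂ))) = Complex.ofRealHom.mapMatrix X := rfl
  rw [this, ← _root_.map_pow]
  rfl

end SpecRadAux

theorem spectral_radius_hadamard_sq_prod_le {n : ℕ} (A B : Matrix (Fin n) (Fin n) ℝ)
    (hA : ∀ i j, 0 ≤ A i j) (hB : ∀ i j, 0 ≤ B i j) :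
    specRad ((A.hadamard A) * (B.hadamard B)) ≤ specRad (A * B) ^ 2 := by
  classical
  set M := (A.hadamard A) * (B.hadamard B) with hMdef
  set C := A * B with hCdef
  have hC2 : (0:ℝ) ≤ specRad C ^ 2 := sq_nonneg _
  apply Real.sSup_le _ hC2
  rintro r ⟨μ, hμ, rfl⟩
  rcases Nat.eq_zero_or_pos n with hn | hn
  · exfalso
    subst hn
    haveI : Subsingleton (Matrix (Fin 0) (Fin 0) ℂ) :=
      ⟨fun a b => by ext i j; exact absurd i.2 (by omega)⟩
    exact (spectrum.mem_iff.mp hμ) (isUnit_of_subsingleton _)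
  · haveI : Nonempty (Fin n) := ⟨⟨0, hn⟩⟩
    set M' := M.map (fun a => (a : ℂ)) with hM'def
    set C' := C.map (fun a => (a : ℂ)) with hC'def
    have hCnn : (0:ℝ) ≤ specRad C := by
      apply Real.sSup_nonneg
      rintro x ⟨μ', _, rfl⟩
      exact norm_nonneg _
    have hfin : (spectrum ℂ C').Finite := Matrix.finite_spectrum C'
    have hbdd : BddAbove {r : ℝ | ∃ μ' ∈ spectrum ℂ C', ‖μ'‖ = r} := by
      have he : {r : ℝ | ∃ μ' ∈ spectrum ℂ C', ‖μ'‖ = r}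
          = (fun z : ℂ => ‖z‖) '' spectrum ℂ C' := rfl
      rw [he]
      exact (hfin.image _).bddAbove
    have hle : ∀ μ' ∈ spectrum ℂ C', ‖μ'‖ ≤ specRad C :=
      fun μ' hμ' => le_csSup hbdd ⟨μ', hμ', rfl⟩
    have hρ : spectralRadius ℂ C' ≤ ENNReal.ofReal (specRad C) := by
      apply iSup₂_le
      intro μ' hμ'
      rw [show (‖μ'‖₊ : ℝ≥0∞) = ENNReal.ofReal ‖μ'‖ from (ofReal_norm μ').symm]
      apply ENNReal.ofReal_le_ofReal
      exact hle μ' hμ'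
    have hG := spectrum.pow_nnnorm_pow_one_div_tendsto_nhds_spectralRadius C'
    have hμle : (‖μ‖₊ : ℝ≥0∞) ≤ (spectralRadius ℂ C') ^ 2 := by
      have hsq : Tendsto (fun k : ℕ => ((‖C' ^ k‖₊ : ℝ≥0∞) ^ (1 / (k:ℝ))) ^ 2) atTop
          (𝓝 ((spectralRadius ℂ C') ^ 2)) := by
        have := (ENNReal.continuous_pow 2).continuousAt.tendsto.comp hG
        simpa [Function.comp_def] using this
      refine ge_of_tendsto hsq ?_
      filter_upwards [eventually_ge_atTop 1] with k hk
      have h1 : μ ^ k ∈ spectrum ℂ (M' ^ k) :=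
        spectrum.pow_image_subset (𝕜 := ℂ) M' k ⟨μ, hμ, rfl⟩
      have h2 : ‖μ ^ k‖₊ ≤ ‖M' ^ k‖₊ := spectrum.norm_le_norm_of_mem h1
      have h3 : ‖M' ^ k‖₊ ≤ ‖C' ^ k‖₊ ^ 2 := by
        rw [hM'def, hC'def, ← SpecRadAux.map_pow, ← SpecRadAux.map_pow]
        apply SpecRadAux.nnnorm_le_sq
        · exact SpecRadAux.pow_entries_nonneg
            (SpecRadAux.mul_entries_nonneg
              (fun i j => mul_nonneg (hA i j) (hA i j))
              (fun i j => mul_nonneg (hB i j) (hB i j))) k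
        · intro i j
          have := SpecRadAux.key hA hB k i j
          simpa [Matrix.hadamard_apply] using this
      have hk0 : (k:ℝ) ≠ 0 := by positivity
      have e1 : (‖μ‖₊ : ℝ≥0∞) = ((‖μ‖₊ : ℝ≥0∞) ^ k) ^ (1 / (k:ℝ)) := by
        rw [← ENNReal.rpow_natCast, ← ENNReal.rpow_mul, mul_one_div,
          div_self hk0, ENNReal.rpow_one]
      rw [e1]
      calc ((‖μ‖₊ : ℝ≥0∞) ^ k) ^ (1 / (k:ℝ))
          ≤ ((‖M' ^ k‖₊ : ℝ≥0∞)) ^ (1 / (k:ℝ)) := by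
            apply ENNReal.rpow_le_rpow _ (by positivity)
            rw [← ENNReal.coe_pow]
            exact_mod_cast (nnnorm_pow μ k) ▸ (ENNReal.coe_le_coe.mpr h2)
        _ ≤ ((‖C' ^ k‖₊ : ℝ≥0∞) ^ 2) ^ (1 / (k:ℝ)) := by
            apply ENNReal.rpow_le_rpow _ (by positivity)
            rw [← ENNReal.coe_pow]
            exact ENNReal.coe_le_coe.mpr h3
        _ = ((‖C' ^ k‖₊ : ℝ≥0∞) ^ (1 / (k:ℝ))) ^ 2 := by
            rw [← ENNReal.rpow_natCast _ 2, ← ENNReal.rpow_mul,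
              ← ENNReal.rpow_natCast _ 2, ← ENNReal.rpow_mul, mul_comm]
    have final : (‖μ‖₊ : ℝ≥0∞) ≤ ENNReal.ofReal (specRad C ^ 2) := by
      calc (‖μ‖₊ : ℝ≥0∞) ≤ (spectralRadius ℂ C') ^ 2 := hμle
        _ ≤ (ENNReal.ofReal (specRad C)) ^ 2 := by
            rw [sq, sq]
            exact mul_le_mul' hρ hρ
        _ = ENNReal.ofReal (specRad C ^ 2) := by
            rw [← ENNReal.ofReal_pow hCnn]
    rw [show (‖μ‖₊ : ℝ≥0∞) = ENNReal.ofReal ‖μ‖ from (ofReal_norm μ).symm] at final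
    have := (ENNReal.ofReal_le_ofReal_iff hC2).mp final
    exact this
end
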